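/- Let G be a free product of cyclic groups and let g be represented by a cyclically reduced, non-self-overlapping word of length at least 2. If g is not conjugate to g^{-1}, then the homogenization of the Brooks quasimorphism φ_g satisfies φ̄_g(g) = 1. -/

import Mathlib

set_option linter.unusedSectionVars false

open Monoid

variable {ι : Type*} [DecidableEq ι] {M : ι → Type*} [∀ i, Group (M i)]
  [∀ i, DecidableEq (M i)] [∀ i, IsCyclic (M i)]

/-- The reduced word (as a list of letters) representing an element of a free product. -/
noncomputable def wordOf (g : CoprodI M) : List (Σ i, M i) :=
  (CoprodI.Word.equiv g).toList

/-- The number of occurrences of `w` as a (contiguous) subword of `l`. -/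
def countOcc (w l : List (Σ i, M i)) : ℕ :=
  ((List.range (l.length + 1)).filter fun k => decide ((l.drop k).take w.length = w)).length

/-- The Brooks counting function `φ_g(h) = C_g(h) - C_{g⁻¹}(h)`. -/
noncomputable def brooks (g h : CoprodI M) : ℤ :=
  (countOcc (wordOf g) (wordOf h) : ℤ) - (countOcc (wordOf g⁻¹) (wordOf h) : ℤ)

/-- A reduced word is cyclically reduced if (when it has length at least two) its first and
last letters lie in different factors. -/
def CyclicallyReduced (l : List (Σ i, M i)) : Prop :=
  2 ≤ l.length → ∀ x ∈ l.head?, ∀ y ∈ l.getLast?, x.1 ≠ y.1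

/-- A word is self-overlapping if it can be written as `v ++ u ++ v` with `v` nontrivial. -/
def SelfOverlapping (l : List (Σ i, M i)) : Prop :=
  ∃ v u : List (Σ i, M i), v ≠ [] ∧ l = v ++ u ++ v

section Aux

open CoprodI List

/-- Product of a list of letters in the free product. -/
noncomputable def listProd (l : List (Σ i, M i)) : CoprodI M :=
  (l.map fun x => CoprodI.of x.2).prod

lemma listProd_append (l₁ l₂ : List (Σ i, M i)) :
    listProd (M := M) (l₁ ++ l₂) = listProd l₁ * listProd l₂ := by
  simp [listProd]

lemma listProd_wordOf (g : CoprodI M) : listProd (wordOf g) = g :=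
  CoprodI.Word.equiv.symm_apply_apply g

lemma wordOf_listProd (l : List (Σ i, M i)) (h1 : ∀ x ∈ l, x.2 ≠ 1)
    (h2 : l.Chain' fun a b => a.1 ≠ b.1) : wordOf (listProd l) = l := by
  have : listProd l = CoprodI.Word.equiv.symm ⟨l, h1, h2⟩ := rfl
  rw [wordOf, this, Equiv.apply_symm_apply]

lemma wordOf_ne_one (g : CoprodI M) : ∀ x ∈ wordOf g, x.2 ≠ 1 :=
  (CoprodI.Word.equiv g).ne_one

lemma wordOf_chain (g : CoprodI M) : (wordOf g).Chain' fun a b => a.1 ≠ b.1 :=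
  (CoprodI.Word.equiv g).chain_ne

/-- `n` concatenated copies of `w`. -/
def repL {α : Type*} (w : List α) : ℕ → List α
  | 0 => []
  | n + 1 => w ++ repL w n

lemma repL_length {α : Type*} (w : List α) (n : ℕ) : (repL w n).length = n * w.length := by
  induction n with
  | zero => simp [repL]
  | succ n ih => simp only [repL, length_append, ih]; ring

lemma repL_head? {α : Type*} (w : List α) (hw : w ≠ []) (n : ℕ) (hn : 1 ≤ n) :
    (repL w n).head? = w.head? := by
  cases n with
  | zero => omega
  | succ n =>
    show (w ++ repL w n).head? = w.head?
    cases w with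
    | nil => exact absurd rfl hw
    | cons a l => rfl

lemma mem_repL {α : Type*} {w : List α} {n : ℕ} {x : α} (hx : x ∈ repL w n) : x ∈ w := by
  induction n with
  | zero => simp [repL] at hx
  | succ n ih =>
    rcases List.mem_append.mp hx with h | h
    · exact h
    · exact ih h

lemma repL_take {α : Type*} (w : List α) {n : ℕ} (hn : 1 ≤ n) {k : ℕ} (hk : k ≤ w.length) :
    (repL w n).take k = w.take k := by
  cases n with
  | zero => omega
  | succ n =>
    show (w ++ repL w n).take k = w.take k
    rw [List.take_append]
    have : k - w.length = 0 := by omega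
    simp [this]

lemma repL_segment {α : Type*} (w : List α) (hw : w ≠ []) :
    ∀ n k, k + w.length ≤ n * w.length →
      ((repL w n).drop k).take w.length = w.drop (k % w.length) ++ w.take (k % w.length) := by
  have hN : 0 < w.length := List.length_pos_iff.mpr hw
  intro n
  induction n with
  | zero => intro k hk; omega
  | succ n ih =>
    intro k hk
    rcases lt_or_ge k w.length with hkN | hkN
    · rw [Nat.mod_eq_of_lt hkN]
      show ((w ++ repL w n).drop k).take w.length = _
      rw [List.drop_append, Nat.sub_eq_zero_of_le (le_of_lt hkN), List.drop_zero,
        List.take_append,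
        List.take_of_length_le (by rw [List.length_drop]; omega)]
      congr 1
      have h1 : w.length - (w.drop k).length = k := by rw [List.length_drop]; omega
      rw [h1]
      by_cases hk0 : k = 0
      · simp [hk0]
      · rcases Nat.eq_zero_or_pos n with rfl | hn
        · have : (1 : ℕ) * w.length = w.length := one_mul _
          omega
        · exact repL_take w hn (le_of_lt hkN)
    · show ((w ++ repL w n).drop k).take w.length = _
      rw [List.drop_append, List.drop_eq_nil_of_le (by omega), List.nil_append]
      have hmod : k % w.length = (k - w.length) % w.length := Nat.mod_eq_sub_mod hkN
      rw [hmod]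
      apply ih
      have : (n + 1) * w.length = n * w.length + w.length := by ring
      omega

lemma selfOverlapping_of_small_rot {w : List (Σ i, M i)} {r : ℕ} (h0 : 0 < r)
    (h2 : 2 * r ≤ w.length) (heq : w = w.drop r ++ w.take r) : SelfOverlapping w := by
  have hvne : w.take r ≠ [] := by
    apply List.ne_nil_of_length_pos
    rw [List.length_take]
    omega
  have hsuf : w.drop (w.length - r) = w.take r := by
    have h := congrArg (List.drop (w.length - r)) heq
    rwa [List.drop_left' (List.length_drop (i := r) (l := w))] at h
  refine ⟨w.take r, (w.drop r).take (w.length - 2 * r), hvne, ?_⟩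
  conv_lhs => rw [← List.take_append_drop r w]
  rw [List.append_assoc]
  congr 1
  conv_lhs => rw [← List.take_append_drop (w.length - 2 * r) (w.drop r)]
  congr 1
  rw [List.drop_drop]
  have : r + (w.length - 2 * r) = w.length - r := by omega
  rw [this, hsuf]

lemma selfOverlapping_of_rot {w : List (Σ i, M i)} {r : ℕ} (h0 : 0 < r)
    (hr : r < w.length) (heq : w = w.drop r ++ w.take r) : SelfOverlapping w := by
  rcases le_or_gt (2 * r) w.length with h2 | h2
  · exact selfOverlapping_of_small_rot h0 h2 heq
  · have hrot : w.rotate r = w := by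
      rw [List.rotate_eq_drop_append_take (le_of_lt hr)]; exact heq.symm
    have hrot' : w.rotate (w.length - r) = w := by
      have h := List.rotate_rotate w r (w.length - r)
      rw [hrot] at h
      rw [h]
      have : r + (w.length - r) = w.length := by omega
      rw [this, List.rotate_length]
    have heq' : w = w.drop (w.length - r) ++ w.take (w.length - r) := by
      rw [← List.rotate_eq_drop_append_take (by omega), hrot']
    exact selfOverlapping_of_small_rot (by omega) (by omega) heq'

lemma filter_dvd_range (N : ℕ) (hN : 0 < N) (n : ℕ) :
    (List.range (n * N)).filter (fun k => decide (N ∣ k)) =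
      List.map (· * N) (List.range n) := by
  induction n with
  | zero => simp
  | succ n ih =>
    have h1 : (n + 1) * N = n * N + N := by ring
    rw [h1, List.range_add, List.filter_append, ih, List.range_succ, List.map_append]
    congr 1
    rw [List.filter_map]
    have hfil : List.filter ((fun k => decide (N ∣ k)) ∘ (fun x => n * N + x)) (List.range N)
        = [0] := by
      have hrange : List.range N = 0 :: List.map Nat.succ (List.range (N - 1)) := by
        rw [← List.range_succ_eq_map]
        congr 1
        omega
      rw [hrange, List.filter_cons]
      have h0 : ((fun k => decide (N ∣ k)) ∘ (fun x => n * N + x)) 0 = true := by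
        simp [Function.comp, dvd_mul_left N n]
      rw [if_pos h0]
      have : List.filter ((fun k => decide (N ∣ k)) ∘ (fun x => n * N + x))
          (List.map Nat.succ (List.range (N - 1))) = [] := by
        rw [List.filter_eq_nil_iff]
        intro a ha
        simp only [List.mem_map, List.mem_range] at ha
        obtain ⟨j, hj, rfl⟩ := ha
        simp only [Function.comp, decide_eq_true_eq]
        intro hdvd
        have hja : N ∣ j.succ := (Nat.dvd_add_right (dvd_mul_left N n)).mp hdvd
        have := Nat.le_of_dvd (Nat.succ_pos j) hja
        omega
      rw [this]
    rw [hfil]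
    simp

lemma countOcc_rep (w : List (Σ i, M i)) (hw2 : 2 ≤ w.length)
    (hso : ¬ SelfOverlapping w) (n : ℕ) : countOcc w (repL w n) = n := by
  have hN : 0 < w.length := by omega
  have hwne : w ≠ [] := by intro h; rw [h] at hw2; simp at hw2
  unfold countOcc
  rw [repL_length]
  have key : ∀ k ∈ List.range (n * w.length + 1),
      (decide (((repL w n).drop k).take w.length = w))
        = (decide (w.length ∣ k ∧ k + w.length ≤ n * w.length)) := by
    intro k hk
    rw [List.mem_range] at hk
    apply decide_eq_decide.mpr
    constructor
    · intro hP
      have hlenle : k + w.length ≤ n * w.length := by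
        have := congrArg List.length hP
        rw [List.length_take, List.length_drop, repL_length] at this
        omega
      refine ⟨?_, hlenle⟩
      have hseg := repL_segment w hwne n k hlenle
      rw [hP] at hseg
      by_contra hndvd
      have hr0 : 0 < k % w.length := by
        rcases Nat.eq_zero_or_pos (k % w.length) with h | h
        · exact absurd (Nat.dvd_of_mod_eq_zero h) hndvd
        · exact h
      exact hso (selfOverlapping_of_rot hr0 (Nat.mod_lt k hN) hseg)
    · rintro ⟨hdvd, hle⟩
      have hseg := repL_segment w hwne n k hle
      have hmod : k % w.length = 0 := by
        obtain ⟨m, rfl⟩ := hdvd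
        exact Nat.mul_mod_right _ _
      rw [hseg, hmod]
      simp
  rw [List.filter_congr key, List.range_succ, List.filter_append]
  have hlast : List.filter
      (fun k => decide (w.length ∣ k ∧ k + w.length ≤ n * w.length)) [n * w.length] = [] := by
    rw [List.filter_eq_nil_iff]
    intro a ha
    simp only [List.mem_singleton] at ha
    subst ha
    simp only [decide_eq_true_eq, not_and]
    intro _
    omega
  have hmain : List.filter
      (fun k => decide (w.length ∣ k ∧ k + w.length ≤ n * w.length)) (List.range (n * w.length))
      = List.filter (fun k => decide (w.length ∣ k)) (List.range (n * w.length)) := by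
    apply List.filter_congr
    intro k hk
    rw [List.mem_range] at hk
    apply decide_eq_decide.mpr
    constructor
    · exact fun h => h.1
    · intro hdvd
      refine ⟨hdvd, ?_⟩
      obtain ⟨m, rfl⟩ := hdvd
      have hmn : m < n := by
        by_contra hc
        push_neg at hc
        have := Nat.mul_le_mul_left w.length hc
        have hcomm : n * w.length = w.length * n := Nat.mul_comm _ _
        omega
      calc w.length * m + w.length = w.length * (m + 1) := by ring
        _ ≤ w.length * n := Nat.mul_le_mul_left _ hmn
        _ = n * w.length := Nat.mul_comm _ _
  rw [hlast, hmain, filter_dvd_range _ hN, List.append_nil, List.length_map, List.length_range]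

lemma wordOf_inv (g : CoprodI M) :
    wordOf g⁻¹ = ((wordOf g).map fun x => (⟨x.1, x.2⁻¹⟩ : Σ i, M i)).reverse := by
  have h1 : ∀ x ∈ ((wordOf g).map fun x => (⟨x.1, x.2⁻¹⟩ : Σ i, M i)).reverse, x.2 ≠ 1 := by
    intro x hx
    rw [List.mem_reverse, List.mem_map] at hx
    obtain ⟨a, ha, rfl⟩ := hx
    exact inv_ne_one.mpr (wordOf_ne_one g a ha)
  have h2 : (((wordOf g).map fun x => (⟨x.1, x.2⁻¹⟩ : Σ i, M i)).reverse).Chain'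
      fun a b => a.1 ≠ b.1 := by
    simp only [List.Chain']
    rw [List.isChain_reverse, List.isChain_map]
    exact List.IsChain.imp (fun a b h => Ne.symm h) (wordOf_chain g)
  have h3 : listProd (((wordOf g).map fun x => (⟨x.1, x.2⁻¹⟩ : Σ i, M i)).reverse) = g⁻¹ := by
    rw [listProd, List.map_reverse, List.map_map]
    conv_rhs => rw [← listProd_wordOf g]
    rw [listProd, List.prod_inv_reverse, List.map_map]
    congr 1
  rw [← h3, wordOf_listProd _ h1 h2]

lemma length_wordOf_inv (g : CoprodI M) : (wordOf g⁻¹).length = (wordOf g).length := by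
  rw [wordOf_inv, List.length_reverse, List.length_map]

lemma wordOf_pow (g : CoprodI M) (hlen : 2 ≤ (wordOf g).length)
    (hcyc : CyclicallyReduced (wordOf g)) (n : ℕ) :
    wordOf (g ^ n) = repL (wordOf g) n := by
  have hwne : wordOf g ≠ [] := by
    intro h; rw [h] at hlen; simp at hlen
  have h1 : ∀ x ∈ repL (wordOf g) n, x.2 ≠ 1 := fun x hx => wordOf_ne_one g x (mem_repL hx)
  have h2 : ∀ m, (repL (wordOf g) m).Chain' fun a b => a.1 ≠ b.1 := by
    intro m
    induction m with
    | zero => simp [repL, List.Chain']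
    | succ m ih =>
      show List.Chain' _ (wordOf g ++ repL (wordOf g) m)
      simp only [List.Chain']
      rw [List.isChain_append]
      refine ⟨wordOf_chain g, ih, ?_⟩
      intro x hx y hy
      cases m with
      | zero => simp [repL] at hy
      | succ m =>
        rw [repL_head? (wordOf g) hwne _ (by omega)] at hy
        exact (hcyc hlen y hy x hx).symm
  have h3 : ∀ m, listProd (repL (wordOf g) m) = g ^ m := by
    intro m
    induction m with
    | zero => simp [repL, listProd]
    | succ m ih =>
      show listProd (wordOf g ++ repL (wordOf g) m) = _
      rw [listProd_append, ih, listProd_wordOf, pow_succ']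
  rw [← h3 n, wordOf_listProd _ h1 (h2 n)]

lemma countOcc_inv_rep (g : CoprodI M) (hlen : 2 ≤ (wordOf g).length)
    (hconj : ¬ IsConj g g⁻¹) (n : ℕ) :
    countOcc (wordOf g⁻¹) (repL (wordOf g) n) = 0 := by
  have hwne : wordOf g ≠ [] := by
    intro h; rw [h] at hlen; simp at hlen
  unfold countOcc
  rw [List.length_eq_zero_iff, List.filter_eq_nil_iff]
  intro k _
  simp only [decide_eq_true_eq]
  intro hP
  exfalso
  apply hconj
  rw [length_wordOf_inv] at hP
  have hle : k + (wordOf g).length ≤ n * (wordOf g).length := by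
    have := congrArg List.length hP
    rw [List.length_take, List.length_drop, repL_length, length_wordOf_inv] at this
    omega
  have hseg := repL_segment (wordOf g) hwne n k hle
  rw [hP] at hseg
  set r := k % (wordOf g).length
  have hg : g = listProd ((wordOf g).take r) * listProd ((wordOf g).drop r) := by
    conv_lhs => rw [← listProd_wordOf g]
    conv_lhs => rw [← List.take_append_drop r (wordOf g)]
    rw [listProd_append]
  have hg' : g⁻¹ = listProd ((wordOf g).drop r) * listProd ((wordOf g).take r) := by
    rw [← listProd_wordOf g⁻¹, hseg, listProd_append]
  have main : ∀ t d : CoprodI M, g = t * d → g⁻¹ = d * t → IsConj g g⁻¹ := by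
    intro t d h1 h2
    rw [isConj_iff]
    refine ⟨d, ?_⟩
    rw [h2, h1]
    group
  exact main _ _ hg hg' 

end Aux

/-- If `g` is cyclically reduced of length at least two, not self-overlapping, and not
conjugate to its inverse, then the homogenized Brooks quasimorphism satisfies `φ̄_g(g) = 1`. -/
theorem brooks_homogenization_eq_one (g : CoprodI M)
    (hlen : 2 ≤ (wordOf g).length)
    (hcyc : CyclicallyReduced (wordOf g))
    (hso : ¬ SelfOverlapping (wordOf g))
    (hconj : ¬ IsConj g g⁻¹) :
    Filter.Tendsto (fun n : ℕ => (brooks g (g ^ n) : ℝ) / (n : ℝ))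
      Filter.atTop (nhds 1) := by
  have hkey : ∀ n : ℕ, 1 ≤ n → brooks g (g ^ n) = (n : ℤ) := by
    intro n _
    rw [brooks, wordOf_pow g hlen hcyc n, countOcc_rep (wordOf g) hlen hso n,
      countOcc_inv_rep g hlen hconj n]
    simp
  apply Filter.Tendsto.congr' _ (tendsto_const_nhds (x := (1 : ℝ)))
  filter_upwards [Filter.eventually_ge_atTop 1] with n hn
  rw [hkey n hn]
  push_cast
  rw [div_self]
  exact Nat.cast_ne_zero.mpr (by omega)
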